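/- Let K be a field of characteristic zero, n ≥ 4, and let D be a derivation of T(n). For 1 ≤ i < k ≤ n denote by A_{ik,ik} the (i,k) entry of the matrix D(N_{ik}). Then for every pair i < k with k − i ≥ 2, A_{ik,ik} = Σ_{p=i}^{k−1} A_{p(p+1),p(p+1)}; that is, the diagonal coefficient of D on N_{ik} is the sum of the diagonal coefficients of D on the adjacent basis elements N_{p(p+1)}, i ≤ p ≤ k−1. -/

import Mathlib

open Matrix

attribute [local instance 100] LieRing.ofAssociativeRing

/-- The Lie algebra `T(n)` of strictly upper triangular `n × n` matrices over `K`. -/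
def strictUpper (n : ℕ) (K : Type*) [Field K] :
    LieSubalgebra K (Matrix (Fin n) (Fin n) K) where
  carrier := {M | ∀ i j : Fin n, j ≤ i → M i j = 0}
  add_mem' := by
    intro a b ha hb i j hij
    simp [Matrix.add_apply, ha i j hij, hb i j hij]
  zero_mem' := by intro i j hij; simp
  smul_mem' := by
    intro c a ha i j hij
    simp [Matrix.smul_apply, ha i j hij]
  lie_mem' := by
    intro a b ha hb i j hij
    have hmul : ∀ x y : Matrix (Fin n) (Fin n) K,
        (∀ i j : Fin n, j ≤ i → x i j = 0) → (∀ i j : Fin n, j ≤ i → y i j = 0) →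
        (x * y) i j = 0 := by
      intro x y hx hy
      rw [Matrix.mul_apply]
      apply Finset.sum_eq_zero
      intro s _
      rcases le_or_gt s i with h | h
      · rw [hx i s h, zero_mul]
      · rw [hy s j (hij.trans h.le), mul_zero]
    rw [Ring.lie_def, Matrix.sub_apply, hmul a b ha hb, hmul b a hb ha, sub_zero]

/-- The standard basis element `N_{ik}` (with `i < k`) of `T(n)`. -/
def stdN {n : ℕ} {K : Type*} [Field K] {i k : Fin n} (h : i < k) :
    strictUpper n K :=
  ⟨Matrix.single i k 1, by
    intro a b hba
    simp only [Matrix.single, Matrix.of_apply, ite_eq_right_iff, one_ne_zero]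
    rintro ⟨rfl, rfl⟩
    exact absurd h (not_lt.mpr hba)⟩

/-- The basis element `N_{ik}` of `T(n)`, indexed by natural numbers (`0`-based). -/
def natN (n : ℕ) (K : Type*) [Field K] (i k : ℕ) (h1 : i < k) (h2 : k < n) :
    strictUpper n K :=
  stdN (i := ⟨i, h1.trans h2⟩) (k := ⟨k, h2⟩) (Fin.mk_lt_mk.mpr h1)


section Aux

variable {K : Type*} [Field K] {n : ℕ}

lemma natN_bracket (i j k : ℕ) (hij : i < j) (hjk : j < k) (hk : k < n) :
    natN n K i k (hij.trans hjk) hk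
      = ⁅natN n K i j hij (hjk.trans hk), natN n K j k hjk hk⁆ := by
  apply Subtype.ext
  rw [LieSubalgebra.coe_bracket]
  show (single (⟨i, _⟩ : Fin n) ⟨k, hk⟩ 1 : Matrix (Fin n) (Fin n) K)
      = ⁅(single ⟨i, _⟩ ⟨j, _⟩ 1 : Matrix (Fin n) (Fin n) K),
          single ⟨j, _⟩ ⟨k, hk⟩ 1⁆
  rw [Ring.lie_def, Matrix.single_mul_single_same, one_mul,
      Matrix.single_mul_single_of_ne, sub_zero]
  simp only [ne_eq, Fin.mk.injEq]
  omega

/-- The diagonal coefficient as a total function. -/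
noncomputable def Acoef (D : LieDerivation K (strictUpper n K) (strictUpper n K))
    (i k : ℕ) : K :=
  if h : i < k ∧ k < n then
    ((D (natN n K i k h.1 h.2) : strictUpper n K) : Matrix (Fin n) (Fin n) K)
      ⟨i, h.1.trans h.2⟩ ⟨k, h.2⟩
  else 0

lemma Acoef_add (D : LieDerivation K (strictUpper n K) (strictUpper n K))
    (i j k : ℕ) (hij : i < j) (hjk : j < k) (hk : k < n) :
    Acoef D i k = Acoef D i j + Acoef D j k := by
  have hi : (⟨i, by omega⟩ : Fin n) ≠ ⟨j, by omega⟩ := by simp; omega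
  have hkj : (⟨k, hk⟩ : Fin n) ≠ ⟨j, by omega⟩ := by simp; omega
  rw [Acoef, Acoef, Acoef, dif_pos ⟨hij.trans hjk, hk⟩, dif_pos ⟨hij, hjk.trans hk⟩,
    dif_pos ⟨hjk, hk⟩]
  rw [natN_bracket i j k hij hjk hk, D.apply_lie_eq_add]
  set X := D (natN n K i j hij (hjk.trans hk)) with hX
  set Y := D (natN n K j k hjk hk) with hY
  have : ((⁅natN n K i j hij (hjk.trans hk), Y⁆ + ⁅X, natN n K j k hjk hk⁆ : strictUpper n K)
        : Matrix (Fin n) (Fin n) K)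
      = ⁅(single ⟨i, by omega⟩ ⟨j, by omega⟩ 1 : Matrix (Fin n) (Fin n) K),
            (Y : Matrix (Fin n) (Fin n) K)⁆
        + ⁅(X : Matrix (Fin n) (Fin n) K), single ⟨j, by omega⟩ ⟨k, hk⟩ 1⁆ := by
    push_cast [LieSubalgebra.coe_bracket]
    rfl
  rw [this, Matrix.add_apply, Ring.lie_def, Ring.lie_def, Matrix.sub_apply, Matrix.sub_apply,
    Matrix.mul_single_apply_same, Matrix.single_mul_apply_same,
    Matrix.single_mul_apply_of_ne (h := hi),
    Matrix.mul_single_apply_of_ne (hbj := hkj)]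
  ring

lemma Acoef_sum (D : LieDerivation K (strictUpper n K) (strictUpper n K))
    (i k : ℕ) (hik : i < k) (hk : k < n) :
    Acoef D i k = ∑ p ∈ Finset.Ico i k, Acoef D p (p + 1) := by
  induction k, hik using Nat.le_induction with
  | base =>
    rw [show Finset.Ico i (i + 1) = {i} from by ext x; simp, Finset.sum_singleton]
  | succ k hk' ih =>
    rw [Acoef_add D i k (k + 1) hk' (Nat.lt_succ_self k) hk,
      ih (by omega), Finset.sum_Ico_succ_top (by omega)]

end Aux

/-- For any derivation $D$ of $T(n)$ and $k - i ≥ 2$, the diagonal coefficient of $D$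
on $N_{ik}$ is the sum of the diagonal coefficients of $D$ on $N_{p(p+1)}$,
$i ≤ p ≤ k-1$. -/
theorem derivation_diagonal_coefficient_sum
    (K : Type*) [Field K] [CharZero K] (n : ℕ) (hn : 4 ≤ n)
    (D : LieDerivation K (strictUpper n K) (strictUpper n K))
    (i k : ℕ) (hik : i + 2 ≤ k) (hk : k < n) :
    ((D (natN n K i k (by omega) hk) : strictUpper n K) : Matrix (Fin n) (Fin n) K)
        ⟨i, by omega⟩ ⟨k, hk⟩ =
      ∑ p ∈ (Finset.Ico i k).attach,
        ((D (natN n K p.1 (p.1 + 1) (Nat.lt_succ_self _)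
              (by have := (Finset.mem_Ico.mp p.2).2; omega)) :
            strictUpper n K) : Matrix (Fin n) (Fin n) K)
          ⟨p.1, by have := (Finset.mem_Ico.mp p.2).2; omega⟩
          ⟨p.1 + 1, by have := (Finset.mem_Ico.mp p.2).2; omega⟩ := by
  have h1 : (((D (natN n K i k (by omega) hk) : strictUpper n K) :
      Matrix (Fin n) (Fin n) K) ⟨i, by omega⟩ ⟨k, hk⟩) = Acoef D i k := by
    rw [Acoef, dif_pos ⟨by omega, hk⟩]
  rw [h1, Acoef_sum D i k (by omega) hk, ← Finset.sum_attach (Finset.Ico i k)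
    (fun p => Acoef D p (p + 1))]
  apply Finset.sum_congr rfl
  intro p _
  have hp := Finset.mem_Ico.mp p.2
  rw [Acoef, dif_pos ⟨Nat.lt_succ_self _, by omega⟩]
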